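/- Let X be a metric space, c ≥ 2, r : ℝ, D and D* multisets over X × Fin c, and let x_1,…,x_m : X be test inputs whose rNN predicted labels a_i := rNN_r(D,x_i) are pairwise distinct. Then the total number of removed neighbors carrying the corresponding predicted labels is bounded by the poisoning size: Σ_{i=1}^m s_{a_i}(N_r(D,x_i) − N_r(D*,x_i)) ≤ S(D,D*), where − denotes multiset difference. -/

import Mathlib

/-- Poisoning size between two multisets: `max (card A) (card B) - card (A ∩ B)`. -/
noncomputable def pSize {α : Type*} (A B : Multiset α) : ℕ :=
  haveI := Classical.decEq α
  max A.card B.card - (A ∩ B).card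

/-- Number of votes for label `l` in a multiset of labeled examples (counted with
multiplicity). -/
def votes {X : Type*} {c : ℕ} (T : Multiset (X × Fin c)) (l : Fin c) : ℕ :=
  T.countP (fun p => p.2 = l)

/-- Tie-broken majority label: the largest label (in the order of `Fin c`) among the
labels attaining the maximum vote count. -/
noncomputable def majLabel {X : Type*} {c : ℕ} (hc : 0 < c) (T : Multiset (X × Fin c)) :
    Fin c :=
  (Finset.univ.filter (fun l : Fin c => ∀ l', votes T l' ≤ votes T l)).max'
    (by
      haveI : NeZero c := ⟨hc.ne'⟩
      obtain ⟨b, -, hb⟩ := Finset.exists_max_image (Finset.univ : Finset (Fin c)) (votes T)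
        Finset.univ_nonempty
      exact ⟨b, Finset.mem_filter.mpr ⟨Finset.mem_univ b, fun l' => hb l' (Finset.mem_univ l')⟩⟩)

/-- The largest label, among those `l ≠ a`, attaining the maximum of `s l` over `l ≠ a`. -/
noncomputable def secondLabel {c : ℕ} (hc : 2 ≤ c) (s : Fin c → ℕ) (a : Fin c) : Fin c :=
  (Finset.univ.filter (fun l : Fin c => l ≠ a ∧ ∀ l', l' ≠ a → s l' ≤ s l)).max'
    (by
      have h1 : 1 < Fintype.card (Fin c) := by rw [Fintype.card_fin]; omega
      obtain ⟨l0, hl0⟩ := Fintype.exists_ne_of_one_lt_card h1 a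
      have hne : (Finset.univ.filter (fun l : Fin c => l ≠ a)).Nonempty :=
        ⟨l0, Finset.mem_filter.mpr ⟨Finset.mem_univ _, hl0⟩⟩
      obtain ⟨b, hb, hbmax⟩ := Finset.exists_max_image _ s hne
      refine ⟨b, Finset.mem_filter.mpr ⟨Finset.mem_univ _, (Finset.mem_filter.mp hb).2, ?_⟩⟩
      intro l' hl'
      exact hbmax l' (Finset.mem_filter.mpr ⟨Finset.mem_univ _, hl'⟩))

/-- Multiset difference (with classical decidable equality). -/
noncomputable def mdiff {α : Type*} (A B : Multiset α) : Multiset α :=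
  haveI := Classical.decEq α
  A - B

/-- rNN neighbor multiset: training examples within distance `r` of the test input `x`. -/
noncomputable def Nr {X : Type*} [MetricSpace X] {c : ℕ} (r : ℝ)
    (D : Multiset (X × Fin c)) (x : X) : Multiset (X × Fin c) :=
  haveI : DecidablePred (fun p : X × Fin c => dist p.1 x ≤ r) := Classical.decPred _
  D.filter (fun p => dist p.1 x ≤ r)

/-- rNN prediction: tie-broken majority label among the rNN neighbors. -/
noncomputable def rNNpred {X : Type*} [MetricSpace X] {c : ℕ} (hc : 0 < c) (r : ℝ)
    (D : Multiset (X × Fin c)) (x : X) : Fin c :=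
  majLabel hc (Nr r D x)

/-- for test inputs whose rNN predicted labels are pairwise distinct, the
total number of removed neighbors carrying the corresponding predicted labels is bounded
by the poisoning size. -/
theorem rnn_total_removed_votes_le {X : Type*} [MetricSpace X] {c : ℕ} (hc : 2 ≤ c)
    (r : ℝ) (D Dstar : Multiset (X × Fin c)) {m : ℕ} (xs : Fin m → X) (a : Fin m → Fin c)
    (ha : ∀ i, a i = rNNpred (by omega : 0 < c) r D (xs i))
    (hdist : Function.Injective a) :
    ∑ i, votes (mdiff (Nr r D (xs i)) (Nr r Dstar (xs i))) (a i) ≤ pSize D Dstar := by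
  haveI := Classical.decEq (X × Fin c)
  set E := mdiff D Dstar with hE
  -- Step A: each summand is bounded by votes E (a i)
  have stepA : ∀ i, votes (mdiff (Nr r D (xs i)) (Nr r Dstar (xs i))) (a i) ≤ votes E (a i) := by
    intro i
    have hfs : mdiff (Nr r D (xs i)) (Nr r Dstar (xs i)) = Multiset.filter
        (fun p : X × Fin c => dist p.1 (xs i) ≤ r) E := by
      simp only [mdiff, Nr, hE]
      rw [@Multiset.filter_sub _ (Classical.decEq _)]
    rw [hfs]
    exact Multiset.countP_le_of_le _ (Multiset.filter_le _ _)
  calc ∑ i, votes (mdiff (Nr r D (xs i)) (Nr r Dstar (xs i))) (a i)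
      ≤ ∑ i, votes E (a i) := Finset.sum_le_sum (fun i _ => stepA i)
    _ = ∑ l ∈ Finset.univ.image a, votes E l := by
        rw [Finset.sum_image (fun x _ y _ h => hdist h)]
    _ ≤ ∑ l : Fin c, votes E l := Finset.sum_le_sum_of_subset (Finset.subset_univ _)
    _ = Multiset.card E := by
        induction E using Multiset.induction with
        | empty => simp [votes]
        | cons p s ih =>
          simp only [votes, Multiset.countP_cons, Multiset.card_cons, Finset.sum_add_distrib]
          simp only [votes] at ih
          rw [ih]
          simp
    _ ≤ pSize D Dstar := by
        have h1 : E = D - D ∩ Dstar := by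
          rw [hE, mdiff, Multiset.sub_inter]
          congr!
        rw [h1, Multiset.card_sub Multiset.inter_le_left]
        simp only [pSize]
        have h2 : @Multiset.card (X × Fin c)
            (@Inter.inter _ (@Multiset.instInter _ (Classical.decEq _)) D Dstar)
            = Multiset.card (D ∩ Dstar) := by congr!
        rw [h2]
        omega
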